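/- Let x_1, ..., x_I be nonempty, pairwise disjoint, compact subsets of ℝ^K, let π ∈ ℝ^I with π_i ≥ 0 and Σ_i π_i = 1, and let z ∈ ℝ^K. Then { ∫ z·y dQ(y) : Q a Borel probability measure on ℝ^K with Q(x_i) = π_i for all i } is exactly the closed interval [ Σ_{i=1}^I π_i · min_{y ∈ x_i} z·y , Σ_{i=1}^I π_i · max_{y ∈ x_i} z·y ], where the patchwise minima and maxima exist by compactness. -/

import Mathlib

open MeasureTheory

/-- Corollary 4 in sharp form: with compact disjoint patches `x i` and patch
probabilities `π i`, the attainable expectations of the linear functional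
`y ↦ z·y` form exactly the closed interval between `∑ i π i mlo i` and
`∑ i π i mhi i`, where `mlo i` and `mhi i` are the attained patchwise minimum
and maximum of `z·y`. -/
theorem stmt6 (K I : ℕ) (x : Fin I → Set (Fin K → ℝ))
    (hne : ∀ i, (x i).Nonempty)
    (hcomp : ∀ i, IsCompact (x i))
    (hdisj : Pairwise (Function.onFun Disjoint x))
    (π : Fin I → ℝ) (hπ0 : ∀ i, 0 ≤ π i) (hπ1 : ∑ i, π i = 1)
    (z : Fin K → ℝ) :
    ∃ mlo mhi : Fin I → ℝ,
      (∀ i, IsLeast ((fun y : Fin K → ℝ => ∑ k, z k * y k) '' x i) (mlo i)) ∧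
      (∀ i, IsGreatest ((fun y : Fin K → ℝ => ∑ k, z k * y k) '' x i) (mhi i)) ∧
      {t : ℝ | ∃ Q : Measure (Fin K → ℝ), IsProbabilityMeasure Q ∧
          (∀ i, (Q (x i)).toReal = π i) ∧
          t = ∫ y, (∑ k, z k * y k) ∂Q}
        = Set.Icc (∑ i, π i * mlo i) (∑ i, π i * mhi i) := by
  set f : (Fin K → ℝ) → ℝ := fun y => ∑ k, z k * y k with hfdef
  have hfc : Continuous f := by
    apply continuous_finset_sum
    intro k _
    exact continuous_const.mul (continuous_apply k)
  have himg : ∀ i, IsCompact (f '' x i) := fun i => (hcomp i).image hfc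
  have himgne : ∀ i, (f '' x i).Nonempty := fun i => (hne i).image f
  choose mlo hmlo using fun i => (himg i).exists_isLeast (himgne i)
  choose mhi hmhi using fun i => (himg i).exists_isGreatest (himgne i)
  have hmeas : ∀ i, MeasurableSet (x i) := fun i => (hcomp i).measurableSet
  have hlohi : ∀ i, mlo i ≤ mhi i := by
    intro i
    obtain ⟨y, hy⟩ := hne i
    exact le_trans ((hmlo i).2 ⟨y, hy, rfl⟩) ((hmhi i).2 ⟨y, hy, rfl⟩)
  refine ⟨mlo, mhi, hmlo, hmhi, ?_⟩
  ext t
  simp only [Set.mem_setOf_eq, Set.mem_Icc]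
  constructor
  · rintro ⟨Q, hQprob, hQx, rfl⟩
    -- a.e. support on the union
    have hQx' : ∀ i, Q (x i) = ENNReal.ofReal (π i) := by
      intro i
      rw [← hQx i, ENNReal.ofReal_toReal (measure_ne_top Q (x i))]
    have hs : MeasurableSet (⋃ i, x i) := MeasurableSet.iUnion (fun i => hmeas i)
    have hQu : Q (⋃ i, x i) = 1 := by
      rw [measure_iUnion hdisj hmeas, tsum_fintype]
      rw [show (∑ i, Q (x i)) = ∑ i, ENNReal.ofReal (π i) from
        Finset.sum_congr rfl (fun i _ => hQx' i)]
      rw [← ENNReal.ofReal_sum_of_nonneg (fun i _ => hπ0 i), hπ1, ENNReal.ofReal_one]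
    have hae : ∀ᵐ y ∂Q, y ∈ ⋃ i, x i := by
      rw [MeasureTheory.ae_iff]
      have h0 : Q (⋃ i, x i)ᶜ = 0 := by
        rw [measure_compl hs (measure_ne_top Q _), hQu, measure_univ, tsub_self]
      convert h0 using 2
      rfl
    -- integrability of f
    have hcu : IsCompact (⋃ i, x i) := isCompact_iUnion (fun i => hcomp i)
    obtain ⟨C, hC⟩ := hcu.exists_bound_of_continuousOn hfc.continuousOn
    have hfint : Integrable f Q := by
      refine Integrable.mono' (integrable_const C) hfc.aestronglyMeasurable ?_
      filter_upwards [hae] with y hy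
      exact hC y hy
    -- the comparison functions
    have hhiint : Integrable (fun y => ∑ i, (x i).indicator (fun _ => mhi i) y) Q := by
      apply integrable_finset_sum
      intro i _
      exact (integrable_const (mhi i)).indicator (hmeas i)
    have hloint : Integrable (fun y => ∑ i, (x i).indicator (fun _ => mlo i) y) Q := by
      apply integrable_finset_sum
      intro i _
      exact (integrable_const (mlo i)).indicator (hmeas i)
    have hind : ∀ (g : Fin I → ℝ), ∫ y, (∑ i, (x i).indicator (fun _ => g i) y) ∂Q
        = ∑ i, π i * g i := by
      intro g
      rw [integral_finset_sum]
      · refine Finset.sum_congr rfl (fun i _ => ?_)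
        rw [integral_indicator_const (g i) (hmeas i), measureReal_def, hQx i, smul_eq_mul]
      · intro i _
        exact (integrable_const (g i)).indicator (hmeas i)
    have collapse : ∀ (g : Fin I → ℝ) (i : Fin I) (y : Fin K → ℝ), y ∈ x i →
        (∑ j, (x j).indicator (fun _ => g j) y) = g i := by
      intro g i y hy
      rw [Finset.sum_eq_single i]
      · simp [Set.indicator_of_mem hy]
      · intro j _ hj
        have : y ∉ x j := fun hyj =>
          Set.disjoint_left.mp (hdisj hj) hyj hy
        simp [Set.indicator_of_notMem this]
      · simp
    constructor
    · rw [← hind mlo]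
      apply integral_mono_ae hloint hfint
      filter_upwards [hae] with y hy
      obtain ⟨i, hi⟩ := Set.mem_iUnion.mp hy
      rw [collapse mlo i y hi]
      exact (hmlo i).2 ⟨y, hi, rfl⟩
    · rw [← hind mhi]
      apply integral_mono_ae hfint hhiint
      filter_upwards [hae] with y hy
      obtain ⟨i, hi⟩ := Set.mem_iUnion.mp hy
      rw [collapse mhi i y hi]
      exact (hmhi i).2 ⟨y, hi, rfl⟩
  · rintro ⟨htL, htU⟩
    -- attaining points
    choose a ha hfa using fun i => (hmlo i).1
    choose b hb hfb using fun i => (hmhi i).1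
    set L := ∑ i, π i * mlo i with hL
    set U := ∑ i, π i * mhi i with hU
    -- mixing parameter
    set θ : ℝ := if U - L = 0 then 0 else (t - L) / (U - L) with hθ
    have hθ0 : 0 ≤ θ := by
      rw [hθ]
      split_ifs with h
      · exact le_refl 0
      · exact div_nonneg (by linarith) (by
          rcases lt_or_eq_of_le (sub_nonneg.mpr (le_trans htL htU) : (0:ℝ) ≤ U - L) with h' | h'
          · linarith
          · exact absurd h'.symm h)
    have hθ1 : θ ≤ 1 := by
      rw [hθ]
      split_ifs with h
      · norm_num
      · rw [div_le_one (by
          rcases lt_or_eq_of_le (sub_nonneg.mpr (le_trans htL htU) : (0:ℝ) ≤ U - L) with h' | h'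
          · linarith
          · exact absurd h'.symm h)]
        linarith
    have hmix : (1 - θ) * L + θ * U = t := by
      rw [hθ]
      split_ifs with h
      · have : U = L := by linarith
        rw [this] at htU
        linarith [le_antisymm htU htL]
      · field_simp
        ring
    -- the measure
    set Q : Measure (Fin K → ℝ) := ∑ i, (ENNReal.ofReal (π i * (1 - θ)) • Measure.dirac (a i)
        + ENNReal.ofReal (π i * θ) • Measure.dirac (b i)) with hQdef
    have hnn1 : ∀ i, 0 ≤ π i * (1 - θ) := fun i => mul_nonneg (hπ0 i) (by linarith)
    have hnn2 : ∀ i, 0 ≤ π i * θ := fun i => mul_nonneg (hπ0 i) hθ0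
    have happ : ∀ s : Set (Fin K → ℝ), MeasurableSet s → Q s =
        ∑ i, (ENNReal.ofReal (π i * (1 - θ)) * (Measure.dirac (a i)) s
          + ENNReal.ofReal (π i * θ) * (Measure.dirac (b i)) s) := by
      intro s hsm
      rw [hQdef]
      rw [show ((∑ i, (ENNReal.ofReal (π i * (1 - θ)) • Measure.dirac (a i)
        + ENNReal.ofReal (π i * θ) • Measure.dirac (b i)) : Measure (Fin K → ℝ)) s)
        = ∑ i, ((ENNReal.ofReal (π i * (1 - θ)) • Measure.dirac (a i)
        + ENNReal.ofReal (π i * θ) • Measure.dirac (b i)) s) from by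
          rw [Measure.coe_finset_sum]; simp]
      refine Finset.sum_congr rfl (fun i _ => ?_)
      rw [Measure.add_apply, Measure.smul_apply, Measure.smul_apply, smul_eq_mul, smul_eq_mul]
    have hdiracx : ∀ (c : Fin K → ℝ) (i j : Fin I), c ∈ x i →
        (Measure.dirac c) (x j) = if i = j then 1 else 0 := by
      intro c i j hc
      rw [Measure.dirac_apply' c (hmeas j)]
      split_ifs with h
      · subst h; simp [Set.indicator_of_mem hc]
      · have : c ∉ x j := fun hcj => Set.disjoint_left.mp (hdisj h) hc hcj
        simp [Set.indicator_of_notMem this]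
    have hQxj : ∀ j, Q (x j) = ENNReal.ofReal (π j) := by
      intro j
      rw [happ (x j) (hmeas j)]
      rw [Finset.sum_eq_single j]
      · rw [hdiracx (a j) j j (ha j), hdiracx (b j) j j (hb j)]
        norm_num
        rw [← ENNReal.ofReal_add (hnn1 j) (hnn2 j)]
        congr 1
        ring
      · intro i _ hij
        rw [hdiracx (a i) i j (ha i), hdiracx (b i) i j (hb i), if_neg hij]
        simp
      · simp
    have hQuniv : Q Set.univ = 1 := by
      rw [happ Set.univ MeasurableSet.univ]
      have : ∀ i : Fin I, (ENNReal.ofReal (π i * (1 - θ)) * (Measure.dirac (a i)) Set.univ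
          + ENNReal.ofReal (π i * θ) * (Measure.dirac (b i)) Set.univ)
          = ENNReal.ofReal (π i) := by
        intro i
        simp only [measure_univ, mul_one]
        rw [← ENNReal.ofReal_add (hnn1 i) (hnn2 i)]
        congr 1
        ring
      rw [Finset.sum_congr rfl (fun i _ => this i),
        ← ENNReal.ofReal_sum_of_nonneg (fun i _ => hπ0 i), hπ1, ENNReal.ofReal_one]
    have hintdirac : ∀ c : Fin K → ℝ, Integrable f (Measure.dirac c) := by
      intro c
      refine Integrable.mono' (integrable_const ‖f c‖) hfc.aestronglyMeasurable ?_
      rw [MeasureTheory.ae_dirac_eq]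
      exact Filter.eventually_pure.2 le_rfl
    have hintpart : ∀ i : Fin I, Integrable f ((ENNReal.ofReal (π i * (1 - θ)) • Measure.dirac (a i)
        + ENNReal.ofReal (π i * θ) • Measure.dirac (b i))) := by
      intro i
      exact ((hintdirac (a i)).smul_measure ENNReal.ofReal_ne_top).add_measure
        ((hintdirac (b i)).smul_measure ENNReal.ofReal_ne_top)
    refine ⟨Q, ⟨hQuniv⟩, fun j => by rw [hQxj j, ENNReal.toReal_ofReal (hπ0 j)], ?_⟩
    rw [hQdef, integral_finset_sum_measure (fun i _ => hintpart i)]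
    have : ∀ i : Fin I, ∫ y, f y ∂(ENNReal.ofReal (π i * (1 - θ)) • Measure.dirac (a i)
        + ENNReal.ofReal (π i * θ) • Measure.dirac (b i))
        = π i * (1 - θ) * mlo i + π i * θ * mhi i := by
      intro i
      rw [integral_add_measure ((hintdirac (a i)).smul_measure ENNReal.ofReal_ne_top)
        ((hintdirac (b i)).smul_measure ENNReal.ofReal_ne_top),
        integral_smul_measure, integral_smul_measure, integral_dirac, integral_dirac,
        ENNReal.toReal_ofReal (hnn1 i), ENNReal.toReal_ofReal (hnn2 i),
        hfa i, hfb i, smul_eq_mul, smul_eq_mul]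
    rw [Finset.sum_congr rfl (fun i _ => this i), Finset.sum_add_distrib]
    rw [show (∑ i, π i * (1 - θ) * mlo i) = (1 - θ) * L from by
      rw [hL, Finset.mul_sum]; exact Finset.sum_congr rfl (fun i _ => by ring)]
    rw [show (∑ i, π i * θ * mhi i) = θ * U from by
      rw [hU, Finset.mul_sum]; exact Finset.sum_congr rfl (fun i _ => by ring)]
    linarith [hmix]
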